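/- GNS construction (existence). Let 𝔄 be a unital *-algebra and ω : 𝔄 → ℂ a positive linear functional with ω(1) ≠ 0. Then there exists a GNS quadruple for (𝔄, ω): a complex Hilbert space H, a subspace D ⊆ H dense in H, a unital ℂ-algebra homomorphism π from 𝔄 into the linear endomorphisms of D satisfying ⟪π(a*)x, y⟫ = ⟪x, π(a)y⟫ for all a ∈ 𝔄 and x, y ∈ D, and a vector ψ ∈ D such that D = {π(b)ψ : b ∈ 𝔄} and ω(a) = ⟪ψ, π(a)ψ⟫ for all a ∈ 𝔄; in particular ‖ψ‖² = ω(1). -/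

import Mathlib

set_option linter.unusedSectionVars false

open scoped ComplexOrder

namespace GNSAux

universe u

variable {A : Type u} [Ring A] [Algebra ℂ A] [StarRing A] [StarModule ℂ A]

theorem smul_left' (ω : A →ₗ[ℂ] ℂ) (c : ℂ) (x y : A) :
    ω (star (c • x) * y) = (starRingEnd ℂ) c * ω (star x * y) := by
  rw [star_smul, starRingEnd_apply, smul_mul_assoc, map_smul, smul_eq_mul]

theorem smul_right' (ω : A →ₗ[ℂ] ℂ) (c : ℂ) (x y : A) :
    ω (star x * (c • y)) = c * ω (star x * y) := by
  rw [mul_smul_comm, map_smul, smul_eq_mul]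

theorem expand' (ω : A →ₗ[ℂ] ℂ) (x y : A) :
    ω (star (x + y) * (x + y))
      = ω (star x * x) + ω (star x * y) + ω (star y * x) + ω (star y * y) := by
  rw [star_add, add_mul, mul_add, mul_add, map_add, map_add, map_add]; ring

variable {ω : A →ₗ[ℂ] ℂ} (hpos : ∀ a : A, 0 ≤ ω (star a * a))
include hpos

theorem im_self (a : A) : (ω (star a * a)).im = 0 :=
  ((Complex.nonneg_iff).1 (hpos a)).2.symm

theorem re_self_nonneg (a : A) : 0 ≤ (ω (star a * a)).re :=
  ((Complex.nonneg_iff).1 (hpos a)).1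

theorem im_add (x y : A) : (ω (star x * y)).im + (ω (star y * x)).im = 0 := by
  have h := im_self hpos (x + y)
  rw [expand' ω x y] at h
  simp only [Complex.add_im, im_self hpos x, im_self hpos y] at h
  linarith

theorem re_eq (x y : A) : (ω (star x * y)).re = (ω (star y * x)).re := by
  have h := im_add hpos (Complex.I • x) y
  rw [smul_left' ω Complex.I x y, smul_right' ω Complex.I y x, Complex.conj_I] at h
  simp only [Complex.mul_im, Complex.neg_re, Complex.I_re, Complex.neg_im, Complex.I_im] at h
  linarith

theorem conj_symm' (x y : A) :
    (starRingEnd ℂ) (ω (star y * x)) = ω (star x * y) := by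
  apply Complex.ext
  · simpa using (re_eq hpos x y).symm
  · have := im_add hpos x y
    simp only [Complex.conj_im]
    linarith

theorem null_right (x y : A) (hy : ω (star y * y) = 0) : ω (star x * y) = 0 := by
  letI c : PreInnerProductSpace.Core ℂ A :=
    { inner := fun x y => ω (star x * y)
      conj_inner_symm := fun x y => conj_symm' hpos x y
      re_inner_nonneg := fun x => re_self_nonneg hpos x
      add_left := fun x y z => by
        show ω (star (x + y) * z) = ω (star x * z) + ω (star y * z)
        rw [star_add, add_mul, map_add]
      smul_left := fun x y r => smul_left' ω r x y }
  have h := InnerProductSpace.Core.inner_mul_inner_self_le (𝕜 := ℂ) (F := A) x y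
  have h' : ‖ω (star x * y)‖ * ‖ω (star y * x)‖
      ≤ (ω (star x * x)).re * (ω (star y * y)).re := h
  rw [hy] at h'
  have hn : ‖ω (star y * x)‖ = ‖ω (star x * y)‖ := by
    rw [← conj_symm' hpos x y, RCLike.norm_conj]
  rw [hn] at h'
  simp only [Complex.zero_re, mul_zero] at h'
  have := norm_nonneg (ω (star x * y))
  have hz : ‖ω (star x * y)‖ = 0 := by nlinarith
  exact norm_eq_zero.mp hz

theorem null_left (x y : A) (hy : ω (star y * y) = 0) : ω (star y * x) = 0 := by
  have := null_right hpos x y hy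
  rw [← conj_symm' hpos y x, this, map_zero]

end GNSAux

namespace GNSAux

universe v
variable {A : Type v} [Ring A] [Algebra ℂ A] [StarRing A] [StarModule ℂ A]

/-- The null space of a positive functional, as a submodule. -/
def nullSpace (ω : A →ₗ[ℂ] ℂ) (hpos : ∀ a : A, 0 ≤ ω (star a * a)) : Submodule ℂ A where
  carrier := {a | ω (star a * a) = 0}
  zero_mem' := by simp
  add_mem' := by
    intro a b ha hb
    show ω (star (a + b) * (a + b)) = 0
    rw [expand' ω a b, ha, hb, null_right hpos a b hb, null_right hpos b a ha]
    ring
  smul_mem' := by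
    intro c a ha
    show ω (star (c • a) * (c • a)) = 0
    rw [smul_left' ω, smul_right' ω, ha]
    ring

variable {ω : A →ₗ[ℂ] ℂ} {hpos : ∀ a : A, 0 ≤ ω (star a * a)}

theorem mem_nullSpace {a : A} : a ∈ nullSpace ω hpos ↔ ω (star a * a) = 0 := Iff.rfl

theorem mul_mem_nullSpace (a n : A) (hn : n ∈ nullSpace ω hpos) :
    a * n ∈ nullSpace ω hpos := by
  rw [mem_nullSpace] at hn ⊢
  rw [star_mul, mul_assoc]
  exact null_left hpos _ n hn

end GNSAux

set_option maxHeartbeats 1000000 in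
/-- **GNS construction (existence).**
If `𝔄` is a unital *-algebra and `ω : 𝔄 → ℂ` a positive linear functional with `ω 1 ≠ 0`,
then there exists a GNS quadruple `(H, D, π, ψ)` for `(𝔄, ω)`. -/
theorem gns_existence {A : Type u} [Ring A] [Algebra ℂ A] [StarRing A] [StarModule ℂ A]
    (ω : A →ₗ[ℂ] ℂ) (hpos : ∀ a : A, 0 ≤ ω (star a * a)) (hone : ω 1 ≠ 0) :
    ∃ (H : Type u) (_ : NormedAddCommGroup H) (_ : InnerProductSpace ℂ H) (_ : CompleteSpace H)
      (D : Submodule ℂ H) (π : A →ₐ[ℂ] Module.End ℂ D) (ψ : D),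
      Dense (D : Set H) ∧
      (∀ (a : A) (x y : D),
        (inner ℂ (((π (star a)) x : D) : H) ((y : D) : H) : ℂ)
          = inner ℂ ((x : D) : H) (((π a) y : D) : H)) ∧
      (∀ x : D, ∃ b : A, (π b) ψ = x) ∧
      (∀ a : A, ω a = inner ℂ ((ψ : D) : H) (((π a) ψ : D) : H)) ∧
      (‖(ψ : H)‖ : ℂ) ^ 2 = ω 1 := by
  classical
  set N : Submodule ℂ A := GNSAux.nullSpace ω hpos with hNdef
  -- the sesquilinear form descended to the quotient
  let f : A → (A ⧸ N →ₗ[ℂ] ℂ) := fun a =>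
    N.liftQ (ω ∘ₗ LinearMap.mulLeft ℂ (star a)) (by
      intro b hb
      simp only [LinearMap.mem_ker, LinearMap.comp_apply, LinearMap.mulLeft_apply]
      exact GNSAux.null_right hpos a b hb)
  have hf : ∀ a b : A, f a (Submodule.Quotient.mk b) = ω (star a * b) := fun a b => rfl
  let F : A →ₛₗ[starRingEnd ℂ] (A ⧸ N →ₗ[ℂ] ℂ) :=
    { toFun := f
      map_add' := fun a b => by
        apply LinearMap.ext; intro x
        obtain ⟨u, rfl⟩ := Submodule.Quotient.mk_surjective N x
        rw [LinearMap.add_apply, hf, hf, hf, star_add, add_mul, map_add]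
      map_smul' := fun c a => by
        apply LinearMap.ext; intro x
        obtain ⟨u, rfl⟩ := Submodule.Quotient.mk_surjective N x
        rw [LinearMap.smul_apply, hf, hf, smul_eq_mul]
        exact GNSAux.smul_left' ω c a u }
  let G : A ⧸ N →ₛₗ[starRingEnd ℂ] (A ⧸ N →ₗ[ℂ] ℂ) :=
    N.liftQ F (by
      intro a ha
      rw [LinearMap.mem_ker]
      apply LinearMap.ext; intro x
      obtain ⟨u, rfl⟩ := Submodule.Quotient.mk_surjective N x
      show f a (Submodule.Quotient.mk u) = 0
      rw [hf]
      exact GNSAux.null_left hpos u a ha)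
  have hG : ∀ a b : A,
      G (Submodule.Quotient.mk a) (Submodule.Quotient.mk b) = ω (star a * b) :=
    fun a b => rfl
  let core : InnerProductSpace.Core ℂ (A ⧸ N) :=
    { inner := fun x y => G x y
      conj_inner_symm := by
        intro x y
        obtain ⟨a, rfl⟩ := Submodule.Quotient.mk_surjective N x
        obtain ⟨b, rfl⟩ := Submodule.Quotient.mk_surjective N y
        show (starRingEnd ℂ) (G _ _) = G _ _
        rw [hG, hG]
        exact GNSAux.conj_symm' hpos a b
      re_inner_nonneg := by
        intro x
        obtain ⟨a, rfl⟩ := Submodule.Quotient.mk_surjective N x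
        show (0:ℝ) ≤ (G (Submodule.Quotient.mk a) (Submodule.Quotient.mk a)).re
        rw [hG]
        exact GNSAux.re_self_nonneg hpos a
      add_left := fun x y z => by
        show G (x + y) z = G x z + G y z
        rw [map_add, LinearMap.add_apply]
      smul_left := fun x y r => by
        show G (r • x) y = (starRingEnd ℂ) r * G x y
        rw [map_smulₛₗ, LinearMap.smul_apply, smul_eq_mul]
      definite := by
        intro x hx
        obtain ⟨a, rfl⟩ := Submodule.Quotient.mk_surjective N x
        rw [Submodule.Quotient.mk_eq_zero]
        have hx' : ω (star a * a) = 0 := hx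
        exact hx' }
  letI : NormedAddCommGroup (A ⧸ N) :=
    @InnerProductSpace.Core.toNormedAddCommGroup ℂ (A ⧸ N) _ _ _ core
  letI : InnerProductSpace ℂ (A ⧸ N) := InnerProductSpace.ofCore core.toCore
  have hinner : ∀ a b : A,
      (inner ℂ (Submodule.Quotient.mk a : A ⧸ N) (Submodule.Quotient.mk b) : ℂ)
        = ω (star a * b) := fun a b => rfl
  -- the Hilbert space: completion of the quotient
  let H : Type u := UniformSpace.Completion (A ⧸ N)
  let e : (A ⧸ N) →ₗᵢ[ℂ] H := UniformSpace.Completion.toComplₗᵢ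
  have hinj : Function.Injective e.toLinearMap := e.injective
  let D : Submodule ℂ H := LinearMap.range e.toLinearMap
  let eQ : (A ⧸ N) ≃ₗ[ℂ] D := LinearEquiv.ofInjective e.toLinearMap hinj
  have hc : ∀ z : A ⧸ N, ((eQ z : D) : H) = (z : H) := by
    intro z
    rw [LinearEquiv.ofInjective_apply]
    rfl
  -- the representation on the quotient
  let πQ : A → Module.End ℂ (A ⧸ N) := fun a =>
    N.mapQ N (LinearMap.mulLeft ℂ a) (fun n hn => GNSAux.mul_mem_nullSpace a n hn)
  have hπQ : ∀ (a u : A),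
      πQ a (Submodule.Quotient.mk u) = Submodule.Quotient.mk (a * u) :=
    fun a u => rfl
  have hconj : ∀ (g : Module.End ℂ (A ⧸ N)) (x : A ⧸ N), eQ.conj g (eQ x) = eQ (g x) := by
    intro g x
    rw [LinearEquiv.conj_apply_apply, LinearEquiv.symm_apply_apply]
  let πL : A →ₗ[ℂ] Module.End ℂ D :=
    { toFun := fun a => eQ.conj (πQ a)
      map_add' := by
        intro a b
        apply LinearMap.ext; intro d
        obtain ⟨x, rfl⟩ := eQ.surjective d
        show eQ.conj (πQ (a + b)) (eQ x) = (eQ.conj (πQ a) + eQ.conj (πQ b)) (eQ x)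
        rw [LinearMap.add_apply, hconj, hconj, hconj, ← eQ.map_add]
        congr 1
        obtain ⟨u, rfl⟩ := Submodule.Quotient.mk_surjective N x
        rw [hπQ, hπQ, hπQ, add_mul, Submodule.Quotient.mk_add]
      map_smul' := by
        intro c a
        apply LinearMap.ext; intro d
        obtain ⟨x, rfl⟩ := eQ.surjective d
        show eQ.conj (πQ (c • a)) (eQ x) = (c • eQ.conj (πQ a)) (eQ x)
        rw [LinearMap.smul_apply, hconj, hconj, ← eQ.map_smul]
        congr 1
        obtain ⟨u, rfl⟩ := Submodule.Quotient.mk_surjective N x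
        rw [hπQ, hπQ, smul_mul_assoc, Submodule.Quotient.mk_smul] }
  have hπL : ∀ (a : A) (x : A ⧸ N), πL a (eQ x) = eQ (πQ a x) := fun a x => hconj (πQ a) x
  let π : A →ₐ[ℂ] Module.End ℂ D := AlgHom.ofLinearMap πL
    (by
      show eQ.conj (πQ 1) = 1
      have : πQ 1 = LinearMap.id := by
        apply LinearMap.ext; intro x
        obtain ⟨u, rfl⟩ := Submodule.Quotient.mk_surjective N x
        rw [hπQ, one_mul, LinearMap.id_apply]
      rw [this, LinearEquiv.conj_id]
      rfl)
    (by
      intro a b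
      apply LinearMap.ext; intro d
      obtain ⟨x, rfl⟩ := eQ.surjective d
      show πL (a * b) (eQ x) = (πL a * πL b) (eQ x)
      rw [Module.End.mul_apply, hπL, hπL, hπL]
      congr 1
      obtain ⟨u, rfl⟩ := Submodule.Quotient.mk_surjective N x
      rw [hπQ, hπQ, hπQ, mul_assoc])
  have hπ : ∀ (a : A) (x : A ⧸ N), π a (eQ x) = eQ (πQ a x) := hπL
  let ψ : D := eQ (Submodule.Quotient.mk 1)
  refine ⟨H, inferInstance, inferInstance, inferInstance, D, π, ψ, ?_, ?_, ?_, ?_, ?_⟩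
  · -- density
    have hD : (D : Set H) = Set.range ((↑) : (A ⧸ N) → H) := by
      rw [LinearMap.coe_range]
      exact congrArg Set.range UniformSpace.Completion.coe_toComplₗᵢ
    rw [hD]
    exact UniformSpace.Completion.denseRange_coe
  · -- adjoint relation
    intro a x y
    obtain ⟨p, rfl⟩ := eQ.surjective x
    obtain ⟨q, rfl⟩ := eQ.surjective y
    rw [hπ, hπ, hc, hc, hc, hc, UniformSpace.Completion.inner_coe,
      UniformSpace.Completion.inner_coe]
    obtain ⟨u, rfl⟩ := Submodule.Quotient.mk_surjective N p
    obtain ⟨v, rfl⟩ := Submodule.Quotient.mk_surjective N q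
    rw [hπQ, hπQ, hinner, hinner, star_mul, star_star, mul_assoc]
  · -- cyclicity
    intro x
    obtain ⟨p, rfl⟩ := eQ.surjective x
    obtain ⟨b, rfl⟩ := Submodule.Quotient.mk_surjective N p
    refine ⟨b, ?_⟩
    rw [hπ]
    congr 1
    rw [hπQ, mul_one]
  · -- the functional is the vector state
    intro a
    rw [hπ, hc, hc, UniformSpace.Completion.inner_coe, hπQ, hinner, star_one, one_mul,
      mul_one]
  · -- the norm of the cyclic vector
    have h1 : (inner ℂ ((ψ : D) : H) ((ψ : D) : H) : ℂ) = ω 1 := by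
      rw [hc, UniformSpace.Completion.inner_coe, hinner, star_one, one_mul]
    exact (inner_self_eq_norm_sq_to_K (𝕜 := ℂ) ((ψ : D) : H)).symm.trans h1
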